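/- arXiv:2010.07507 — 4 statements merged into one kernel-verified Lean document; each statement's English description precedes it below -/
import Mathlib

section
/- Let (O, m) be a Noetherian local ring and let π ∈ m be an element that is not a zero divisor in O. If O is not reduced (i.e. O contains a nonzero nilpotent element), then the quotient ring O/πO is not reduced. -/
/-- Let `(O, m)` be a Noetherian local ring and let `π ∈ m` be a
non-zerodivisor of `O`. If `O` is not reduced, then `O ⧸ (π)` is not reduced. -/
theorem quotient_not_reduced_of_not_reduced
    (O : Type*) [CommRing O] [IsNoetherianRing O] [IsLocalRing O]
    (π : O) (hπ : π ∈ IsLocalRing.maximalIdeal O) (hreg : π ∈ nonZeroDivisors O)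
    (hO : ¬ IsReduced O) :
    ¬ IsReduced (O ⧸ Ideal.span ({π} : Set O)) := by
  intro hred
  apply hO
  -- obtain a nonzero nilpotent; first get one with square zero
  by_contra h
  rw [isReduced_iff] at h
  push_neg at h
  obtain ⟨x, hx, hx0⟩ := h
  -- get y ≠ 0 with y^2 = 0
  obtain ⟨k, hk⟩ := hx
  have hsq : ∃ y : O, y ≠ 0 ∧ y * y = 0 := by
    -- minimal n with x^n = 0
    have hex : ∃ n, x ^ n = 0 := ⟨k, hk⟩
    classical
    let n := Nat.find hex
    have hn : x ^ n = 0 := Nat.find_spec hex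
    have hn1 : 1 ≤ n := by
      rcases Nat.eq_zero_or_pos n with h0 | h1
      · exfalso; apply hx0; simpa [h0] using hn
      · exact h1
    have hn2 : 2 ≤ n := by
      rcases Nat.lt_or_ge n 2 with h2 | h2
      · exfalso
        interval_cases n
        exact hx0 (by simpa using hn)
      · exact h2
    refine ⟨x ^ (n - 1), ?_, ?_⟩
    · exact Nat.find_min hex (by omega)
    · have h' : x ^ (n - 1) * x ^ (n - 1) = x ^ n * x ^ (n - 2) := by
        rw [← pow_add, ← pow_add]
        congr 1
        omega
      simp [h', hn]
  obtain ⟨y, hy0, hy2⟩ := hsq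
  -- Krull: find n with y ∈ (π)^n, y ∉ (π)^(n+1)
  have hbot : (⨅ n : ℕ, Ideal.span ({π} : Set O) ^ n) = ⊥ :=
    Ideal.iInf_pow_eq_bot_of_isLocalRing _
      (fun h => (IsLocalRing.maximalIdeal.isMaximal O).ne_top
        (top_le_iff.mp (h ▸ Ideal.span_le.mpr (by simpa using hπ))))
  have hnotall : ¬ ∀ n : ℕ, y ∈ Ideal.span ({π} : Set O) ^ n := by
    intro hall
    exact hy0 (by simpa [hbot] using Ideal.mem_iInf.mpr hall)
  classical
  have hex2 : ∃ n, ¬ y ∈ Ideal.span ({π} : Set O) ^ n := by push_neg at hnotall; exact hnotall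
  let n := Nat.find hex2
  have hmem : y ∈ Ideal.span ({π} : Set O) ^ (n - 1) := by
    rcases Nat.eq_zero_or_pos n with h0 | h1
    · exfalso
      have hy : y ∈ Ideal.span ({π} : Set O) ^ n := by rw [h0]; simp
      exact Nat.find_spec hex2 hy
    · have := Nat.find_min hex2 (show n - 1 < n by omega)
      push_neg at this
      exact this
  have hnmem : y ∉ Ideal.span ({π} : Set O) ^ n := Nat.find_spec hex2
  have hn1 : 1 ≤ n := by
    rcases Nat.eq_zero_or_pos n with h0 | h1
    · exfalso; exact hnmem (by simp [h0])
    · exact h1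
  -- write y = π^(n-1) * y'
  rw [Ideal.span_singleton_pow, Ideal.mem_span_singleton] at hmem
  obtain ⟨y', hy'⟩ := hmem
  have hy'notmem : y' ∉ Ideal.span ({π} : Set O) := by
    intro hmem'
    rw [Ideal.mem_span_singleton] at hmem'
    obtain ⟨z, hz⟩ := hmem'
    apply hnmem
    rw [Ideal.span_singleton_pow, Ideal.mem_span_singleton]
    refine ⟨z, ?_⟩
    rw [hy', hz]
    have : π ^ n = π ^ (n - 1) * π := by rw [← pow_succ]; congr 1; omega
    rw [this]; ring
  -- y'^2 = 0 since π^(2(n-1)) y'^2 = y^2 = 0 and π regular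
  have hy'2 : y' * y' = 0 := by
    have : π ^ (n - 1) * π ^ (n - 1) * (y' * y') = 0 := by
      have := hy2
      rw [hy'] at this
      linear_combination this
    have hreg' : (π ^ (n - 1) * π ^ (n - 1)) ∈ nonZeroDivisors O :=
      mul_mem (pow_mem hreg _) (pow_mem hreg _)
    exact mem_nonZeroDivisors_iff_right.mp hreg' _ (by linear_combination this)
  -- conclude: image of y' in quotient is nonzero nilpotent, contradicting hred
  have himg : (Ideal.Quotient.mk (Ideal.span ({π} : Set O)) y') ≠ 0 := by
    intro h0
    exact hy'notmem (Ideal.Quotient.eq_zero_iff_mem.mp h0)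
  apply himg
  apply hred.eq_zero
  exact ⟨2, by rw [pow_two, ← map_mul, hy'2, map_zero]⟩
end

section
/- Let k be a field of prime characteristic p and let R = k[a,b,y]/(a^p + b^p·y) be the quotient of the polynomial ring in three variables a, b, y by the principal ideal generated by a^p + b^p·y. Then R is an integral domain and R is not integrally closed in its field of fractions; explicitly, the element a/b of Frac(R) is integral over R (it satisfies T^p + y = 0) but does not lie in R. -/
open MvPolynomial

set_option synthInstance.maxHeartbeats 400000
set_option maxHeartbeats 1000000

/-- The ring `R = k[a,b,y]/(a^p + b^p·y)`, where the variables `X 0, X 1, X 2` of the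
polynomial ring play the roles of `a, b, y` respectively. -/
abbrev ExampleRing (k : Type*) [Field k] (p : ℕ) : Type _ :=
  MvPolynomial (Fin 3) k ⧸ Ideal.span {(X 0 ^ p + X 1 ^ p * X 2 : MvPolynomial (Fin 3) k)}

section Aux

variable {k : Type*} [Field k]

lemma auxNotUnitX {n : ℕ} (j : Fin n) : ¬ IsUnit (X j : MvPolynomial (Fin n) k) := by
  intro h
  have h2 : IsUnit ((eval fun _ => (0 : k)) (X j)) := h.map _
  rw [eval_X] at h2
  exact not_isUnit_zero h2

lemma auxKey {p : ℕ} (hp : 2 ≤ p) {n : ℕ} (j : Fin n) (c : MvPolynomial (Fin n) k)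
    (h : (X j : MvPolynomial (Fin n) k) = c * X j ^ p) : False := by
  have hne : (X j : MvPolynomial (Fin n) k) ≠ 0 := X_ne_zero j
  obtain ⟨q, rfl⟩ : ∃ q, p = q + 2 := ⟨p - 2, by omega⟩
  have h1 : 1 * X j = (c * X j ^ (q + 1)) * X j := by linear_combination h
  have h2 : (1 : MvPolynomial (Fin n) k) = c * X j ^ (q + 1) := mul_right_cancel₀ hne h1
  exact auxNotUnitX j (isUnit_of_dvd_one ⟨c * X j ^ q, h2.trans (by ring)⟩)

lemma auxPrimeX0 : Prime (X 0 : MvPolynomial (Fin 2) k) := by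
  have h : Prime ((finSuccEquiv k 1).toMulEquiv (X 0 : MvPolynomial (Fin 2) k)) := by
    have e0 : (finSuccEquiv k 1).toMulEquiv (X 0 : MvPolynomial (Fin 2) k)
        = (Polynomial.X : Polynomial (MvPolynomial (Fin 1) k)) := finSuccEquiv_X_zero
    rw [e0]
    exact Polynomial.prime_X
  exact (MulEquiv.prime_iff (finSuccEquiv k 1).toMulEquiv).mp h

lemma auxNotDvd : ¬ ((X 0 : MvPolynomial (Fin 2) k) ∣ X 1) := by
  rintro ⟨w, hw⟩
  have := congrArg (eval fun i : Fin 2 => if i = 0 then (0 : k) else 1) hw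
  simp at this

/-- The degree-one polynomial `C (X 1 ^ p) + C (X 0 ^ p) * X` is irreducible. -/
lemma auxIrr (p : ℕ) (hp : p.Prime) :
    Irreducible (Polynomial.C ((X 1 : MvPolynomial (Fin 2) k) ^ p)
      + Polynomial.C ((X 0 : MvPolynomial (Fin 2) k) ^ p) * Polynomial.X) := by
  set S := MvPolynomial (Fin 2) k
  set g : Polynomial S := Polynomial.C ((X 1 : S) ^ p) + Polynomial.C ((X 0 : S) ^ p) * Polynomial.X
    with hg
  have hc1 : ((X 0 : S) ^ p) ≠ 0 := pow_ne_zero _ (X_ne_zero _)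
  have hdeg : g.degree = 1 := by
    rw [hg, add_comm]
    exact Polynomial.degree_linear hc1
  have hnatdeg : g.natDegree = 1 := Polynomial.natDegree_eq_of_degree_eq_some hdeg
  have hg0 : g ≠ 0 := fun h => by simp [h] at hdeg
  -- a common divisor of the two coefficients is a unit
  have hprim : ∀ c : S, c ∣ (X 1 : S) ^ p → c ∣ (X 0 : S) ^ p → IsUnit c := by
    intro c hd1 hd0
    by_contra hu
    have hcne : c ≠ 0 := by
      rintro rfl
      exact hc1 (zero_dvd_iff.mp hd0)
    obtain ⟨q, hqirr, hqc⟩ := WfDvdMonoid.exists_irreducible_factor hu hcne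
    have hqprime : Prime q := UniqueFactorizationMonoid.irreducible_iff_prime.mp hqirr
    have hq0 : q ∣ (X 0 : S) := hqprime.dvd_of_dvd_pow (hqc.trans hd0)
    have hq1 : q ∣ (X 1 : S) := hqprime.dvd_of_dvd_pow (hqc.trans hd1)
    have hassoc : Associated q (X 0 : S) :=
      hqirr.associated_of_dvd (auxPrimeX0 (k := k)).irreducible hq0
    exact auxNotDvd (hassoc.symm.dvd.trans hq1)
  constructor
  · intro h
    have := Polynomial.degree_eq_zero_of_isUnit h
    rw [hdeg] at this
    exact one_ne_zero this
  · intro a b hab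
    have ha0 : a ≠ 0 := fun h => hg0 (by rw [hab, h, zero_mul])
    have hb0 : b ≠ 0 := fun h => hg0 (by rw [hab, h, mul_zero])
    have hnd : a.natDegree + b.natDegree = 1 := by
      rw [← Polynomial.natDegree_mul ha0 hb0, ← hab, hnatdeg]
    have hCunit : ∀ u v : Polynomial S, g = u * v → u.natDegree = 0 → IsUnit u := by
      intro u v huv hu0
      have hu : u = Polynomial.C (u.coeff 0) := Polynomial.eq_C_of_natDegree_eq_zero hu0
      have hdvd : Polynomial.C (u.coeff 0) ∣ g := ⟨v, by rw [huv, ← hu]⟩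
      rw [Polynomial.C_dvd_iff_dvd_coeff] at hdvd
      have hd1 : u.coeff 0 ∣ (X 1 : S) ^ p := by simpa [hg, ← map_pow] using hdvd 0
      have hd0 : u.coeff 0 ∣ (X 0 : S) ^ p := by simpa [hg, ← map_pow] using hdvd 1
      rw [hu]
      exact Polynomial.isUnit_C.mpr (hprim _ hd1 hd0)
    rcases Nat.eq_zero_or_pos a.natDegree with h | h
    · exact Or.inl (hCunit a b hab h)
    · exact Or.inr (hCunit b a (by rw [hab, mul_comm]) (by omega))

/-- The defining polynomial is prime. -/
lemma auxPrimeF (p : ℕ) (hp : p.Prime) :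
    Prime (X 0 ^ p + X 1 ^ p * X 2 : MvPolynomial (Fin 3) k) := by
  set Φ := (renameEquiv k (Equiv.swap (0 : Fin 3) 2)).trans (finSuccEquiv k 2) with hΦ
  have e0 : Φ (X 0) = Polynomial.C (X 1 : MvPolynomial (Fin 2) k) := by
    rw [hΦ, AlgEquiv.trans_apply, renameEquiv_apply, rename_X, Equiv.swap_apply_left,
      show (2 : Fin 3) = Fin.succ 1 from rfl, finSuccEquiv_X_succ]
  have e1 : Φ (X 1) = Polynomial.C (X 0 : MvPolynomial (Fin 2) k) := by
    rw [hΦ, AlgEquiv.trans_apply, renameEquiv_apply, rename_X,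
      Equiv.swap_apply_of_ne_of_ne (by decide) (by decide),
      show (1 : Fin 3) = Fin.succ 0 from rfl, finSuccEquiv_X_succ]
  have e2 : Φ (X 2) = (Polynomial.X : Polynomial (MvPolynomial (Fin 2) k)) := by
    rw [hΦ, AlgEquiv.trans_apply, renameEquiv_apply, rename_X, Equiv.swap_apply_right,
      finSuccEquiv_X_zero]
  have himg : Φ.toMulEquiv (X 0 ^ p + X 1 ^ p * X 2 : MvPolynomial (Fin 3) k)
      = Polynomial.C ((X 1 : MvPolynomial (Fin 2) k) ^ p)
        + Polynomial.C ((X 0 : MvPolynomial (Fin 2) k) ^ p) * Polynomial.X := by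
    show Φ (X 0 ^ p + X 1 ^ p * X 2 : MvPolynomial (Fin 3) k) = _
    rw [map_add, map_mul, map_pow, map_pow, e0, e1, e2, map_pow, map_pow]
  refine (MulEquiv.prime_iff Φ.toMulEquiv).mp ?_
  rw [himg]
  exact UniqueFactorizationMonoid.irreducible_iff_prime.mp (auxIrr p hp)

end Aux

/-- Let `k` be a field of prime characteristic `p` and let
`R = k[a,b,y]/(a^p + b^p·y)`. Then `R` is an integral domain which is not integrally closed in
its fraction field: explicitly, the element `t = a/b` of `Frac(R)` (characterized by `b·t = a`)
satisfies `t^p + y = 0`, is integral over `R`, but does not lie in (the image of) `R`. -/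
theorem quotient_domain_not_integrallyClosed
    (k : Type*) [Field k] (p : ℕ) (hp : p.Prime) [CharP k p] :
    IsDomain (ExampleRing k p) ∧
      ¬ IsIntegrallyClosed (ExampleRing k p) ∧
      ∃ t : FractionRing (ExampleRing k p),
        (algebraMap (ExampleRing k p) (FractionRing (ExampleRing k p))
              (Ideal.Quotient.mk _ (X 1 : MvPolynomial (Fin 3) k)) * t
            = algebraMap (ExampleRing k p) (FractionRing (ExampleRing k p))
              (Ideal.Quotient.mk _ (X 0 : MvPolynomial (Fin 3) k))) ∧
          t ^ p + algebraMap (ExampleRing k p) (FractionRing (ExampleRing k p))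
              (Ideal.Quotient.mk _ (X 2 : MvPolynomial (Fin 3) k)) = 0 ∧
          IsIntegral (ExampleRing k p) t ∧
          t ∉ (algebraMap (ExampleRing k p) (FractionRing (ExampleRing k p))).range := by
  classical
  set f : MvPolynomial (Fin 3) k := X 0 ^ p + X 1 ^ p * X 2 with hf
  set I : Ideal (MvPolynomial (Fin 3) k) := Ideal.span {f} with hI
  have hfprime : Prime f := auxPrimeF p hp
  haveI hIprime : I.IsPrime := (Ideal.span_singleton_prime hfprime.ne_zero).mpr hfprime
  haveI hdom : IsDomain (ExampleRing k p) := Ideal.Quotient.isDomain I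
  -- notation
  set R := ExampleRing k p
  set F := FractionRing R
  have hinj : Function.Injective (algebraMap R F) := IsFractionRing.injective R F
  set mk : MvPolynomial (Fin 3) k →+* R := Ideal.Quotient.mk I with hmk
  set alg : R →+* F := (algebraMap R F : R →+* F) with halg
  -- the evaluation sending X 1 to 0
  set φ : MvPolynomial (Fin 3) k →+* MvPolynomial (Fin 3) k :=
    (aeval (fun i : Fin 3 => if i = 1 then 0 else X i) :
      MvPolynomial (Fin 3) k →ₐ[k] MvPolynomial (Fin 3) k).toRingHom with hφ
  have hφ1 : φ (X 1) = 0 := by simp [hφ]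
  have hφ0 : φ (X 0) = X 0 := by simp [hφ]
  have hφf : φ f = X 0 ^ p := by
    simp [hφ, hf, map_add, map_mul, map_pow, zero_pow hp.ne_zero]
  -- X 1 is nonzero mod I
  have hB : mk (X 1) ≠ 0 := by
    intro h
    rw [hmk, Ideal.Quotient.eq_zero_iff_mem, hI, Ideal.mem_span_singleton] at h
    obtain ⟨c, hc⟩ := h
    -- apply the evaluation X 0 ↦ 0, X 2 ↦ 1 instead
    set ψ : MvPolynomial (Fin 3) k →+* MvPolynomial (Fin 3) k :=
      (aeval (fun i : Fin 3 => if i = 0 then 0 else if i = 2 then 1 else X i) :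
        MvPolynomial (Fin 3) k →ₐ[k] MvPolynomial (Fin 3) k).toRingHom with hψ
    have := congrArg ψ hc
    have hψ1 : ψ (X 1) = X 1 := by simp [hψ]
    have hψf : ψ f = X 1 ^ p := by
      simp [hψ, hf, map_add, map_mul, map_pow, zero_pow hp.ne_zero]
    rw [hψ1, map_mul, hψf] at this
    exact auxKey hp.two_le 1 (ψ c) (by linear_combination this)
  have hB' : alg (mk (X 1)) ≠ 0 := fun h => hB (hinj (by simpa using h))
  set A' := alg (mk (X 0)) with hA'
  set B' := alg (mk (X 1)) with hB'def
  set Y' := alg (mk (X 2)) with hY'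
  set t : F := A' / B' with ht
  -- the fundamental relation in R and F
  have hrel0 : mk (X 0) ^ p + mk (X 1) ^ p * mk (X 2) = 0 := by
    rw [← map_pow, ← map_pow, ← map_mul, ← map_add, hmk, Ideal.Quotient.eq_zero_iff_mem]
    exact Ideal.mem_span_singleton_self f
  have hrelF : A' ^ p + B' ^ p * Y' = 0 := by
    have := congrArg alg hrel0
    simpa [map_add, map_mul, map_pow] using this
  have ht1 : B' * t = A' := by
    rw [ht, mul_div_cancel₀ _ hB']
  have ht2 : t ^ p + Y' = 0 := by
    have hBp : B' ^ p ≠ 0 := pow_ne_zero _ hB'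
    rw [ht, div_pow, div_add' _ _ _ hBp, div_eq_zero_iff]
    left
    linear_combination hrelF
  have hint : IsIntegral R t := by
    refine ⟨Polynomial.X ^ p + Polynomial.C (mk (X 2)), ?_, ?_⟩
    · refine Polynomial.monic_X_pow_add (lt_of_le_of_lt Polynomial.degree_C_le ?_)
      exact_mod_cast hp.pos
    · simp only [Polynomial.eval₂_add, Polynomial.eval₂_pow, Polynomial.eval₂_X,
        Polynomial.eval₂_C]
      exact ht2
  have hnot : t ∉ (algebraMap R F).range := by
    rintro ⟨r, hr⟩
    obtain ⟨g, rfl⟩ := Ideal.Quotient.mk_surjective r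
    have h1 : alg (mk (X 1 * g)) = alg (mk (X 0)) := by
      rw [map_mul, map_mul]
      show B' * alg (mk g) = A'
      rw [show alg (mk g) = t from hr, ht1]
    have h2 : mk (X 1 * g - X 0) = 0 := by
      rw [map_sub, sub_eq_zero]
      exact hinj h1
    rw [hmk, Ideal.Quotient.eq_zero_iff_mem, hI, Ideal.mem_span_singleton] at h2
    obtain ⟨c, hc⟩ := h2
    have := congrArg φ hc
    rw [map_sub, map_mul, hφ1, hφ0, map_mul, hφf, zero_mul, zero_sub] at this
    exact auxKey hp.two_le (0 : Fin 3) (-(φ c)) (by linear_combination -this)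
  refine ⟨hdom, ?_, t, ht1, ht2, hint, hnot⟩
  intro hIC
  obtain ⟨y, hy⟩ := IsIntegrallyClosed.isIntegral_iff.mp hint
  exact hnot ⟨y, hy⟩
end

section
/- Let k be a field of prime characteristic p and let R = k[a,b,y]/(a^p + b^p·y). Let P be the ideal of R generated by the images of a and b. Then P is a prime ideal of R of height 1, and the localization R_P is not a regular local ring (equivalently, R_P is not a discrete valuation ring). -/
open MvPolynomial

set_option synthInstance.maxHeartbeats 400000
set_option maxHeartbeats 1000000

/-- The ideal `P = (a, b)` of `R = k[a,b,y]/(a^p + b^p·y)`. -/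
noncomputable abbrev ExampleIdeal (k : Type*) [Field k] (p : ℕ) : Ideal (ExampleRing k p) :=
  Ideal.span {Ideal.Quotient.mk _ (X 0 : MvPolynomial (Fin 3) k),
    Ideal.Quotient.mk _ (X 1 : MvPolynomial (Fin 3) k)}

namespace ExAux

variable {k : Type*} [Field k]

/-- Subtracting the "kill some variables" evaluation lands in the span of those variables. -/
lemma sub_aeval_mem_span {n : ℕ} (Z : Fin n → Prop) [DecidablePred Z]
    (q : MvPolynomial (Fin n) k) :
    q - aeval (fun i => if Z i then 0 else X i) q ∈ Ideal.span (X '' {i | Z i}) := by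
  induction q using MvPolynomial.induction_on with
  | C a => simp
  | add q r hq hr =>
      have : q + r - aeval (fun i => if Z i then 0 else X i) (q + r)
          = (q - aeval (fun i => if Z i then 0 else X i) q)
            + (r - aeval (fun i => if Z i then 0 else X i) r) := by
        rw [map_add]; ring
      rw [this]; exact Ideal.add_mem _ hq hr
  | mul_X q i hq =>
      rw [map_mul, aeval_X]
      by_cases hi : Z i
      · rw [if_pos hi, mul_zero, sub_zero]
        exact Ideal.mul_mem_left _ _ (Ideal.subset_span ⟨i, hi, rfl⟩)
      · rw [if_neg hi]
        have : q * X i - aeval (fun i => if Z i then 0 else X i) q * X i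
            = (q - aeval (fun i => if Z i then 0 else X i) q) * X i := by ring
        rw [this]
        exact Ideal.mul_mem_right _ _ hq

end ExAux

namespace ExAux2
open ExAux

variable {k : Type*} [Field k]

noncomputable def ψ3 : MvPolynomial (Fin 3) k →ₐ[k] Polynomial k :=
  aeval ![0, 0, Polynomial.X]

noncomputable def ψ2 : MvPolynomial (Fin 2) k →ₐ[k] Polynomial k :=
  aeval ![0, Polynomial.X]

lemma ker_ψ3 : RingHom.ker (ψ3 (k := k)) = Ideal.span {X 0, X 1} := by
  apply le_antisymm
  · intro q hq
    have hq' : ψ3 q = 0 := hq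
    have key := sub_aeval_mem_span (k := k) (fun i : Fin 3 => i = 0 ∨ i = 1) q
    have hcomp : ((Polynomial.aeval (X 2 : MvPolynomial (Fin 3) k)).comp (ψ3 (k := k)))
        = aeval (fun i : Fin 3 => if i = 0 ∨ i = 1 then 0 else X i) := by
      rw [ψ3, MvPolynomial.comp_aeval]
      congr 1
      funext i
      fin_cases i <;> simp
    have hσ : aeval (fun i : Fin 3 => if i = 0 ∨ i = 1 then 0 else (X i : MvPolynomial (Fin 3) k)) q = 0 := by
      rw [← hcomp]
      simp [hq']
    rw [hσ, sub_zero] at key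
    have himg : (X '' {i : Fin 3 | i = 0 ∨ i = 1} : Set (MvPolynomial (Fin 3) k))
        = {X 0, X 1} := by
      have : {i : Fin 3 | i = 0 ∨ i = 1} = ({0, 1} : Set (Fin 3)) := by
        ext i; simp [Set.mem_insert_iff]
      rw [this, Set.image_insert_eq, Set.image_singleton]
    rwa [himg] at key
  · rw [Ideal.span_le]
    rintro x (rfl | rfl)
    · show (ψ3 (k := k)) (X 0) = 0
      simp [ψ3]
    · show (ψ3 (k := k)) (X 1) = 0
      simp [ψ3]

lemma ker_ψ2 : RingHom.ker (ψ2 (k := k)) = Ideal.span {X 0} := by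
  apply le_antisymm
  · intro q hq
    have hq' : ψ2 q = 0 := hq
    have key := sub_aeval_mem_span (k := k) (fun i : Fin 2 => i = 0) q
    have hcomp : ((Polynomial.aeval (X 1 : MvPolynomial (Fin 2) k)).comp (ψ2 (k := k)))
        = aeval (fun i : Fin 2 => if i = 0 then 0 else X i) := by
      rw [ψ2, MvPolynomial.comp_aeval]
      congr 1
      funext i
      fin_cases i <;> simp
    have hσ : aeval (fun i : Fin 2 => if i = 0 then 0 else (X i : MvPolynomial (Fin 2) k)) q = 0 := by
      rw [← hcomp]
      simp [hq']
    rw [hσ, sub_zero] at key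
    have himg : (X '' {i : Fin 2 | i = 0} : Set (MvPolynomial (Fin 2) k))
        = {X 0} := by
      have : {i : Fin 2 | i = 0} = ({0} : Set (Fin 2)) := rfl
      rw [this, Set.image_singleton]
    rwa [himg] at key
  · rw [Ideal.span_le]
    rintro x rfl
    show (ψ2 (k := k)) (X 0) = 0
    simp [ψ2]

end ExAux2

namespace ExPrime

variable {k : Type*} [Field k]

noncomputable def fpoly (k : Type*) [Field k] (p : ℕ) : MvPolynomial (Fin 3) k :=
  X 0 ^ p + X 1 ^ p * X 2

lemma prime_X0 : Prime (X 0 : MvPolynomial (Fin 2) k) := by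
  refine (MulEquiv.prime_iff (MvPolynomial.finSuccEquiv k 1).toRingEquiv.toMulEquiv (p := X 0)).mp ?_
  rw [show ((MvPolynomial.finSuccEquiv k 1).toRingEquiv.toMulEquiv
      (X 0 : MvPolynomial (Fin 2) k)) = Polynomial.X from MvPolynomial.finSuccEquiv_X_zero]
  exact Polynomial.prime_X

lemma prime_X1 : Prime (X 1 : MvPolynomial (Fin 2) k) := by
  have h := (MulEquiv.prime_iff (renameEquiv k (Equiv.swap (0 : Fin 2) 1)).toRingEquiv.toMulEquiv
    (p := (X 0 : MvPolynomial (Fin 2) k))).mpr prime_X0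
  rwa [show ((renameEquiv k (Equiv.swap (0 : Fin 2) 1)).toRingEquiv.toMulEquiv
      (X 0 : MvPolynomial (Fin 2) k)) = X 1 by
    show (renameEquiv k (Equiv.swap (0 : Fin 2) 1)) (X 0) = X 1
    simp] at h

lemma not_X0_dvd_X1 : ¬ (X 0 : MvPolynomial (Fin 2) k) ∣ X 1 := by
  rintro ⟨c, hc⟩
  have := congrArg (aeval (R := k) ![(0 : Polynomial k), Polynomial.X]) hc
  simp at this

end ExPrime

namespace ExPrime2
open ExPrime

variable {k : Type*} [Field k] {p : ℕ}

lemma isUnit_of_dvd_pows {r : MvPolynomial (Fin 2) k} (h0 : r ∣ X 0 ^ p) (h1 : r ∣ X 1 ^ p) :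
    IsUnit r := by
  obtain ⟨i, _, ha⟩ := (dvd_prime_pow prime_X0 p).mp h0
  cases i with
  | zero =>
      rw [pow_zero] at ha
      exact associated_one_iff_isUnit.mp ha
  | succ i =>
      exfalso
      have hX0r : (X 0 : MvPolynomial (Fin 2) k) ∣ r :=
        dvd_trans (dvd_pow_self (X 0) (Nat.succ_ne_zero i)) ha.symm.dvd
      exact not_X0_dvd_X1 (prime_X0.dvd_of_dvd_pow (dvd_trans hX0r h1))

/-- the polynomial `g = C (X0^p) * Y + C (X1^p)` over `k[x₀,x₁]`. -/
noncomputable def gpoly (k : Type*) [Field k] (p : ℕ) : Polynomial (MvPolynomial (Fin 2) k) :=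
  Polynomial.C (X 0 ^ p) * Polynomial.X + Polynomial.C (X 1 ^ p)

lemma gpoly_isPrimitive : (gpoly k p).IsPrimitive := by
  intro r hr
  have hc1 : (gpoly k p).coeff 1 = X 0 ^ p := by
    rw [gpoly, Polynomial.coeff_add, Polynomial.coeff_C_mul, Polynomial.coeff_X_one, mul_one,
      Polynomial.coeff_C]
    simp
  have hc0 : (gpoly k p).coeff 0 = X 1 ^ p := by
    rw [gpoly, Polynomial.coeff_add, Polynomial.coeff_C_mul, Polynomial.coeff_X_zero, mul_zero,
      Polynomial.coeff_C]
    simp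
  have h1 : r ∣ X 0 ^ p := hc1 ▸ (Polynomial.C_dvd_iff_dvd_coeff r (gpoly k p)).mp hr 1
  have h0 : r ∣ X 1 ^ p := hc0 ▸ (Polynomial.C_dvd_iff_dvd_coeff r (gpoly k p)).mp hr 0
  exact isUnit_of_dvd_pows h1 h0

lemma gpoly_irreducible (hp : 0 < p) : Irreducible (gpoly k p) := by
  set K := FractionRing (MvPolynomial (Fin 2) k)
  have hinj : Function.Injective (algebraMap (MvPolynomial (Fin 2) k) K) :=
    IsFractionRing.injective _ _
  refine Polynomial.IsPrimitive.irreducible_of_irreducible_map_of_injective hinj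
    gpoly_isPrimitive ?_
  refine Polynomial.irreducible_of_degree_eq_one ?_
  rw [Polynomial.degree_map_eq_of_injective hinj, gpoly]
  exact Polynomial.degree_linear (pow_ne_zero _ (MvPolynomial.X_ne_zero 0))

lemma prime_fpoly (hp : 0 < p) : Prime (fpoly k p) := by
  set e := ((renameEquiv k (Equiv.swap (0 : Fin 3) 2)).trans (MvPolynomial.finSuccEquiv k 2))
    with he
  have hef : e (fpoly k p) = gpoly k p := by
    rw [fpoly, gpoly, map_add, map_mul, map_pow, map_pow]
    have h0 : e (X 0) = Polynomial.C (X 1) := by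
      rw [he]
      simp only [AlgEquiv.trans_apply, renameEquiv_apply, rename_X, Equiv.swap_apply_left]
      rw [show (2 : Fin 3) = Fin.succ 1 from rfl, MvPolynomial.finSuccEquiv_X_succ]
    have h1 : e (X 1) = Polynomial.C (X 0) := by
      rw [he]
      simp only [AlgEquiv.trans_apply, renameEquiv_apply, rename_X]
      rw [show (Equiv.swap (0 : Fin 3) 2) 1 = Fin.succ 0 by decide,
        MvPolynomial.finSuccEquiv_X_succ]
    have h2 : e (X 2) = Polynomial.X := by
      rw [he]
      simp only [AlgEquiv.trans_apply, renameEquiv_apply, rename_X, Equiv.swap_apply_right]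
      exact MvPolynomial.finSuccEquiv_X_zero
    rw [h0, h1, h2, ← map_pow, ← map_pow]
    ring
  have hgp : Prime (gpoly k p) :=
    UniqueFactorizationMonoid.irreducible_iff_prime.mp (gpoly_irreducible hp)
  have := (MulEquiv.prime_iff e.toRingEquiv.toMulEquiv (p := fpoly k p)).mp
  exact this (by rwa [show (e.toRingEquiv.toMulEquiv (fpoly k p)) = e (fpoly k p) from rfl, hef])

end ExPrime2

namespace ExMain
open ExAux ExAux2 ExPrime ExPrime2

variable {k : Type*} [Field k] {p : ℕ}

noncomputable def mkq (k : Type*) [Field k] (p : ℕ) :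
    MvPolynomial (Fin 3) k →+* ExampleRing k p :=
  Ideal.Quotient.mk _

lemma ker_mkq : RingHom.ker (mkq k p) = Ideal.span {fpoly k p} := by
  rw [show Ideal.span {fpoly k p}
    = Ideal.span {(X 0 ^ p + X 1 ^ p * X 2 : MvPolynomial (Fin 3) k)} from rfl]
  exact Ideal.mk_ker

lemma fpoly_mem_span (hp : 0 < p) :
    fpoly k p ∈ Ideal.span ({X 0, X 1} : Set (MvPolynomial (Fin 3) k)) := by
  obtain ⟨n, rfl⟩ := Nat.exists_eq_succ_of_ne_zero hp.ne'
  rw [Ideal.mem_span_pair]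
  refine ⟨X 0 ^ n, X 1 ^ n * X 2, ?_⟩
  rw [fpoly]
  simp only [Nat.succ_eq_add_one]
  ring

lemma span_X01_prime :
    (Ideal.span ({X 0, X 1} : Set (MvPolynomial (Fin 3) k))).IsPrime := by
  rw [← ker_ψ3]
  exact RingHom.ker_isPrime _

lemma P_eq_map :
    ExampleIdeal k p
      = Ideal.map (mkq k p) (Ideal.span ({X 0, X 1} : Set (MvPolynomial (Fin 3) k))) := by
  rw [Ideal.map_span, Set.image_insert_eq, Set.image_singleton]
  rfl

lemma P_prime (hp : 0 < p) : (ExampleIdeal k p).IsPrime := by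
  rw [P_eq_map]
  haveI := span_X01_prime (k := k)
  refine Ideal.map_isPrime_of_surjective Ideal.Quotient.mk_surjective ?_
  rw [Ideal.mk_ker, Ideal.span_le]
  rintro x rfl
  exact fpoly_mem_span hp

noncomputable def φR (k : Type*) [Field k] (p : ℕ) (hp : 0 < p) :
    ExampleRing k p →+* Polynomial k :=
  Ideal.Quotient.lift _ (ψ3 (k := k)).toRingHom (by
    intro a ha
    have h : a ∈ RingHom.ker (ψ3 (k := k)) := by
      rw [ker_ψ3]
      refine Ideal.span_le.mpr ?_ ha
      rintro x rfl
      exact fpoly_mem_span hp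
    exact h)

lemma φR_mk (hp : 0 < p) (t : MvPolynomial (Fin 3) k) :
    φR k p hp (mkq k p t) = ψ3 (k := k) t :=
  rfl

lemma ker_φR (hp : 0 < p) : RingHom.ker (φR k p hp) = ExampleIdeal k p := by
  apply le_antisymm
  · intro x hx
    obtain ⟨t, rfl⟩ := Ideal.Quotient.mk_surjective x
    have ht : t ∈ RingHom.ker (ψ3 (k := k)) := hx
    rw [ker_ψ3] at ht
    rw [P_eq_map]
    exact Ideal.mem_map_of_mem _ ht
  · rw [ExampleIdeal, Ideal.span_le]
    rintro x (rfl | rfl)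
    · show φR k p hp (mkq k p (X 0)) = 0
      rw [φR_mk]
      simp [ψ3]
    · show φR k p hp (mkq k p (X 1)) = 0
      rw [φR_mk]
      simp [ψ3]

end ExMain

namespace ExMain2
open ExAux ExAux2 ExPrime ExPrime2 ExMain

variable {k : Type*} [Field k] {p : ℕ}

lemma span_fpoly_prime (hp : 0 < p) :
    (Ideal.span {(X 0 ^ p + X 1 ^ p * X 2 : MvPolynomial (Fin 3) k)}).IsPrime := by
  rw [show ({(X 0 ^ p + X 1 ^ p * X 2 : MvPolynomial (Fin 3) k)} : Set _)
    = {fpoly k p} from rfl]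
  exact (Ideal.span_singleton_prime (prime_fpoly hp).ne_zero).mpr (prime_fpoly hp)

lemma domainR (hp : 0 < p) : IsDomain (ExampleRing k p) := by
  haveI := span_fpoly_prime (k := k) hp
  exact Ideal.Quotient.isDomain _

lemma mk_ne_zero_of (hp : p.Prime) (t : MvPolynomial (Fin 3) k) (v : Fin 3 → Polynomial k)
    (hf : aeval v (fpoly k p) = Polynomial.X ^ p) (ht : aeval v t = Polynomial.X) :
    mkq k p t ≠ 0 := by
  intro h
  have hmem : t ∈ Ideal.span {fpoly k p} := by
    rw [← ker_mkq]
    exact h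
  rw [Ideal.mem_span_singleton] at hmem
  obtain ⟨c, hc⟩ := hmem
  have := congrArg (aeval v) hc
  rw [map_mul, hf, ht] at this
  have hc0 : aeval v c ≠ 0 := by
    intro h0
    rw [h0, mul_zero] at this
    exact Polynomial.X_ne_zero this
  have hdeg := congrArg Polynomial.natDegree this
  rw [Polynomial.natDegree_X,
    Polynomial.natDegree_mul (pow_ne_zero _ Polynomial.X_ne_zero) hc0,
    Polynomial.natDegree_X_pow] at hdeg
  have := hp.two_le
  omega

lemma mk_X0_ne_zero (hp : p.Prime) : mkq k p (X 0) ≠ 0 := by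
  refine mk_ne_zero_of hp _ ![Polynomial.X, 0, 0] ?_ ?_
  · rw [fpoly]
    simp
  · simp

lemma mk_X1_ne_zero (hp : p.Prime) : mkq k p (X 1) ≠ 0 := by
  refine mk_ne_zero_of hp _ ![0, Polynomial.X, 1] ?_ ?_
  · rw [fpoly]
    simp [zero_pow hp.ne_zero]
  · simp

lemma relation : (mkq k p (X 0)) ^ p + (mkq k p (X 1)) ^ p * mkq k p (X 2) = 0 := by
  rw [← map_pow, ← map_pow, ← map_mul, ← map_add]
  exact Ideal.Quotient.eq_zero_iff_mem.mpr (Ideal.subset_span rfl)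

end ExMain2

namespace ExChain
open ExAux ExAux2 ExPrime ExPrime2 ExMain ExMain2

variable {k : Type*} [Field k] {p : ℕ}

noncomputable def AB (k : Type*) [Field k] (p : ℕ) :
    MvPolynomial (Fin 2) k →ₐ[k] ExampleRing k p :=
  aeval ![mkq k p (X 1), mkq k p (X 2)]

lemma AB_X0 : AB k p (X 0) = mkq k p (X 1) := by simp [AB]

lemma AB_X1 : AB k p (X 1) = mkq k p (X 2) := by simp [AB]

lemma comp_φR_AB (hp : 0 < p) :
    (φR k p hp).comp (AB k p).toRingHom = (ψ2 (k := k)).toRingHom := by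
  apply MvPolynomial.ringHom_ext
  · intro a
    show (φR k p hp) ((AB k p) (C a)) = ψ2 (C a)
    have h1 : (AB k p) (C a) = mkq k p (C a) := by
      rw [show (C a : MvPolynomial (Fin 2) k) = algebraMap k _ a from by
          rw [MvPolynomial.algebraMap_eq],
        AlgHom.commutes,
        show (C a : MvPolynomial (Fin 3) k) = algebraMap k _ a from by
          rw [MvPolynomial.algebraMap_eq]]
      exact (Ideal.Quotient.mk_algebraMap k _ a).symm
    rw [h1, φR_mk]
    simp [ψ3, ψ2]
  · intro i
    fin_cases i
    · show (φR k p hp) ((AB k p) (X 0)) = ψ2 (X 0)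
      rw [AB_X0, φR_mk]
      simp [ψ3, ψ2]
    · show (φR k p hp) ((AB k p) (X 1)) = ψ2 (X 1)
      rw [AB_X1, φR_mk]
      simp [ψ3, ψ2]

lemma comap_AB_P (hp : 0 < p) :
    Ideal.comap (AB k p).toRingHom (ExampleIdeal k p)
      = Ideal.span {(X 0 : MvPolynomial (Fin 2) k)} := by
  rw [← ker_φR hp, RingHom.comap_ker, comp_φR_AB hp, ← ker_ψ2]
  rfl

lemma eq_bot_of_prime_le_span_X0 (q : Ideal (MvPolynomial (Fin 2) k)) (hq : q.IsPrime)
    (hle : q ≤ Ideal.span {(X 0 : MvPolynomial (Fin 2) k)})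
    (hX0 : (X 0 : MvPolynomial (Fin 2) k) ∉ q) : q = ⊥ := by
  have key : ∀ h : MvPolynomial (Fin 2) k, h ∈ q → h = 0 := fun h =>
    WellFounded.induction (wellFounded_dvdNotUnit)
      (C := fun h => h ∈ q → h = 0) h (fun h IH hh => by
        rcases Ideal.mem_span_singleton'.mp (hle hh) with ⟨c, hc⟩
        have hcq : c ∈ q := (hq.mem_or_mem (show c * X 0 ∈ q from hc ▸ hh)).resolve_right hX0
        by_cases hc0 : c = 0
        · rw [← hc, hc0, zero_mul]
        · exact absurd (IH c ⟨hc0, X 0, prime_X0.not_unit, hc.symm⟩ hcq) hc0)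
  rw [eq_bot_iff]
  intro h hh
  rw [Ideal.mem_bot]
  exact key h hh

lemma no_chain (hp : p.Prime) : ¬ ∃ Q₁ Q₂ : Ideal (ExampleRing k p),
    Q₁.IsPrime ∧ Q₂.IsPrime ∧ Q₁ < Q₂ ∧ Q₂ < ExampleIdeal k p := by
  haveI := domainR (k := k) hp.pos
  rintro ⟨Q₁, Q₂, hQ1, hQ2, h12, h2P⟩
  letI : Algebra (MvPolynomial (Fin 2) k) (ExampleRing k p) := (AB k p).toRingHom.toAlgebra
  haveI : IsScalarTower k (MvPolynomial (Fin 2) k) (ExampleRing k p) :=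
    IsScalarTower.of_algebraMap_eq fun x => ((AB k p).commutes x).symm
  have halg : algebraMap (MvPolynomial (Fin 2) k) (ExampleRing k p) = (AB k p).toRingHom := rfl
  set x0 := mkq k p (X 0) with hx0def
  -- x0 is integral over k[x₀,x₁]
  have hx0 : IsIntegral (MvPolynomial (Fin 2) k) x0 := by
    refine ⟨Polynomial.X ^ p + Polynomial.C (X 0 ^ p * X 1), ?_, ?_⟩
    · refine Polynomial.monic_X_pow_add ?_
      exact lt_of_le_of_lt Polynomial.degree_C_le (by exact_mod_cast hp.pos)
    · rw [Polynomial.eval₂_add, Polynomial.eval₂_X_pow, Polynomial.eval₂_C, halg]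
      show x0 ^ p + (AB k p) (X 0 ^ p * X 1) = 0
      rw [map_mul, map_pow, AB_X0, AB_X1]
      exact relation
  -- adjoin of x0 is everything
  have hadj : Algebra.adjoin (MvPolynomial (Fin 2) k) {x0} = ⊤ := by
    rw [eq_top_iff]
    have h2 : Set.range (fun i : Fin 3 => mkq k p (X i)) = (mkq k p) '' (Set.range X) := by
      rw [← Set.range_comp]; rfl
    have h1 : Algebra.adjoin k (Set.range (fun i : Fin 3 => mkq k p (X i))) = ⊤ := by
      rw [h2, show ((mkq k p) '' (Set.range X) : Set (ExampleRing k p))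
        = (Ideal.Quotient.mkₐ k _) '' (Set.range X) from rfl]
      rw [← AlgHom.map_adjoin, MvPolynomial.adjoin_range_X, Algebra.map_top]
      rw [AlgHom.range_eq_top]
      exact Ideal.Quotient.mkₐ_surjective k _
    have hle : Algebra.adjoin k (Set.range (fun i : Fin 3 => mkq k p (X i)))
        ≤ Subalgebra.restrictScalars k (Algebra.adjoin (MvPolynomial (Fin 2) k) {x0}) := by
      apply Algebra.adjoin_le
      rintro y ⟨i, rfl⟩
      rw [SetLike.mem_coe, Subalgebra.mem_restrictScalars]
      fin_cases i
      · exact Algebra.subset_adjoin rfl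
      · show mkq k p (X 1) ∈ Algebra.adjoin (MvPolynomial (Fin 2) k) {x0}
        rw [show mkq k p (X 1) = algebraMap (MvPolynomial (Fin 2) k) (ExampleRing k p) (X 0)
          from (AB_X0).symm]
        exact Subalgebra.algebraMap_mem _ _
      · show mkq k p (X 2) ∈ Algebra.adjoin (MvPolynomial (Fin 2) k) {x0}
        rw [show mkq k p (X 2) = algebraMap (MvPolynomial (Fin 2) k) (ExampleRing k p) (X 1)
          from (AB_X1).symm]
        exact Subalgebra.algebraMap_mem _ _
    intro x _
    have hx : x ∈ Algebra.adjoin k (Set.range (fun i : Fin 3 => mkq k p (X i))) := by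
      rw [h1]; trivial
    exact (Subalgebra.mem_restrictScalars k).mp (hle hx)
  have hint : ∀ x : ExampleRing k p, IsIntegral (MvPolynomial (Fin 2) k) x := fun x =>
    IsIntegral.of_mem_of_fg _ hx0.fg_adjoin_singleton x (by rw [hadj]; trivial)
  set q2 := Ideal.comap (algebraMap (MvPolynomial (Fin 2) k) (ExampleRing k p)) Q₂ with hq2def
  haveI : Q₂.IsPrime := hQ2
  haveI hq2prime : q2.IsPrime := Ideal.comap_isPrime _ _
  by_cases hX0 : (X 0 : MvPolynomial (Fin 2) k) ∈ q2
  · -- then mk X1 ∈ Q₂, hence mk X0 ∈ Q₂, hence P ≤ Q₂, contradiction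
    have hx1 : mkq k p (X 1) ∈ Q₂ := by
      have := hX0
      rw [hq2def, Ideal.mem_comap, halg] at this
      rwa [show (AB k p).toRingHom (X 0) = mkq k p (X 1) from AB_X0] at this
    have hx0' : x0 ∈ Q₂ := by
      have hpow : x0 ^ p ∈ Q₂ := by
        have hx0p : x0 ^ p = -(mkq k p (X 1) ^ p * mkq k p (X 2)) :=
          eq_neg_of_add_eq_zero_left relation
        rw [hx0p]
        exact neg_mem (Ideal.mul_mem_right _ _ (Ideal.pow_mem_of_mem _ hx1 p hp.pos))
      exact hQ2.mem_of_pow_mem p hpow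
    have hPle : ExampleIdeal k p ≤ Q₂ := by
      rw [show ExampleIdeal k p = Ideal.span {x0, mkq k p (X 1)} from rfl, Ideal.span_le]
      rintro x (rfl | rfl)
      exacts [hx0', hx1]
    exact absurd hPle (not_le_of_gt h2P)
  · have hq2le : q2 ≤ Ideal.span {(X 0 : MvPolynomial (Fin 2) k)} := by
      rw [← comap_AB_P hp.pos]
      exact Ideal.comap_mono h2P.le
    have hQ2ne : Q₂ ≠ ⊥ := by
      intro h
      rw [h] at h12
      exact not_lt_bot h12
    obtain ⟨x, hxQ, hxne⟩ := Submodule.exists_mem_ne_zero_of_ne_bot hQ2ne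
    have hq2ne : q2 ≠ ⊥ :=
      Ideal.comap_ne_bot_of_integral_mem hxne hxQ (hint x)
    exact hq2ne (eq_bot_of_prime_le_span_X0 q2 hq2prime hq2le hX0)

end ExChain

namespace ExDVR
open ExAux ExAux2 ExPrime ExPrime2 ExMain ExMain2

variable {k : Type*} [Field k] {p : ℕ}

lemma deg_contradiction (hp : p.Prime) {u v : Polynomial k} (hv : v ≠ 0)
    (h : u ^ p * Polynomial.X = -(v ^ p)) : False := by
  have hu : u ≠ 0 := by
    intro h0
    rw [h0, zero_pow hp.ne_zero, zero_mul] at h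
    exact pow_ne_zero p hv (neg_eq_zero.mp h.symm)
  have hdeg := congrArg Polynomial.natDegree h
  rw [Polynomial.natDegree_neg, Polynomial.natDegree_pow,
    Polynomial.natDegree_mul (pow_ne_zero _ hu) Polynomial.X_ne_zero,
    Polynomial.natDegree_pow, Polynomial.natDegree_X] at hdeg
  -- p * du + 1 = p * dv
  have h1 : p ∣ 1 :=
    (Nat.dvd_add_right (dvd_mul_right p u.natDegree)).mp
      (hdeg ▸ dvd_mul_right p v.natDegree)
  have := Nat.le_of_dvd one_pos h1
  have := hp.two_le
  omega

lemma deg_contradiction' (hp : p.Prime) {u v : Polynomial k} (hv : v ≠ 0)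
    (h : u ^ p = -(Polynomial.X * v ^ p)) : False := by
  have hu : u ≠ 0 := by
    intro h0
    rw [h0, zero_pow hp.ne_zero] at h
    exact mul_ne_zero Polynomial.X_ne_zero (pow_ne_zero p hv) (neg_eq_zero.mp h.symm)
  have hdeg := congrArg Polynomial.natDegree h
  rw [Polynomial.natDegree_neg, Polynomial.natDegree_pow,
    Polynomial.natDegree_mul Polynomial.X_ne_zero (pow_ne_zero _ hv),
    Polynomial.natDegree_pow, Polynomial.natDegree_X] at hdeg
  -- p * du = 1 + p * dv
  have h1 : p ∣ 1 := by
    have h3 : p ∣ p * v.natDegree := dvd_mul_right p v.natDegree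
    have h2 : p ∣ 1 + p * v.natDegree := hdeg ▸ dvd_mul_right p u.natDegree
    rwa [add_comm, Nat.dvd_add_right h3] at h2
  have := Nat.le_of_dvd one_pos h1
  have := hp.two_le
  omega

lemma case_a (hp : p.Prime) (r s : ExampleRing k p) (hs : s ∉ ExampleIdeal k p)
    (h : r ^ p * mkq k p (X 2) = -(s ^ p)) : False := by
  have hφs : φR k p hp.pos s ≠ 0 := by
    intro h0
    have hmem : s ∈ RingHom.ker (φR k p hp.pos) := h0
    rw [ker_φR hp.pos] at hmem
    exact hs hmem
  have h5 := congrArg (φR k p hp.pos) h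
  rw [map_mul, map_pow, map_neg, map_pow] at h5
  rw [show φR k p hp.pos (mkq k p (X 2)) = Polynomial.X by rw [φR_mk]; simp [ψ3]] at h5
  exact deg_contradiction hp hφs h5

lemma case_b (hp : p.Prime) (r s : ExampleRing k p) (hs : s ∉ ExampleIdeal k p)
    (h : r ^ p = -(mkq k p (X 2) * s ^ p)) : False := by
  have hφs : φR k p hp.pos s ≠ 0 := by
    intro h0
    have hmem : s ∈ RingHom.ker (φR k p hp.pos) := h0
    rw [ker_φR hp.pos] at hmem
    exact hs hmem
  have h5 := congrArg (φR k p hp.pos) h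
  rw [map_pow, map_neg, map_mul, map_pow] at h5
  rw [show φR k p hp.pos (mkq k p (X 2)) = Polynomial.X by rw [φR_mk]; simp [ψ3]] at h5
  exact deg_contradiction' hp hφs h5

lemma dvr_contra_general {L : Type*} [CommRing L] [IsDomain L] [IsLocalRing L]
    (hp : p.Prime) (Af : ExampleRing k p →+* L) (hinj : Function.Injective Af)
    (hmax : IsLocalRing.maximalIdeal L
      = Ideal.span {Af (mkq k p (X 0)), Af (mkq k p (X 1))})
    (hfrac : ∀ c : L, ∃ r s : ExampleRing k p, s ∉ ExampleIdeal k p ∧ c * Af s = Af r)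
    (hprinc : (IsLocalRing.maximalIdeal L).IsPrincipal) : False := by
  set x0 := Af (mkq k p (X 0)) with hx0
  set x1 := Af (mkq k p (X 1)) with hx1
  set x2 := Af (mkq k p (X 2)) with hx2
  have hx1ne : x1 ≠ 0 := fun h => mk_X1_ne_zero hp (hinj (by rw [← hx1, h, map_zero]))
  have hx0ne : x0 ≠ 0 := fun h => mk_X0_ne_zero hp (hinj (by rw [← hx0, h, map_zero]))
  have hrelL : x0 ^ p + x1 ^ p * x2 = 0 := by
    have := congrArg Af (relation (k := k) (p := p))
    rw [map_add, map_mul, map_pow, map_pow, map_zero] at this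
    exact this
  obtain ⟨π, hπ0⟩ := hprinc.principal
  rw [hmax] at hπ0
  have hπ : Ideal.span ({x0, x1} : Set L) = Ideal.span {π} := hπ0
  have hx0mem : x0 ∈ Ideal.span ({π} : Set L) := by
    rw [← hπ]
    exact Ideal.subset_span (Set.mem_insert _ _)
  have hx1mem : x1 ∈ Ideal.span ({π} : Set L) := by
    rw [← hπ]
    exact Ideal.subset_span (Set.mem_insert_of_mem _ rfl)
  have hπne : π ≠ 0 := by
    intro h
    rw [h] at hx1mem
    rw [Ideal.span_singleton_eq_bot.mpr rfl, Ideal.mem_bot] at hx1mem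
    exact hx1ne hx1mem
  have hπmem : π ∈ Ideal.span ({x0, x1} : Set L) := by
    rw [hπ]
    exact Ideal.subset_span rfl
  obtain ⟨α, β, hπeq⟩ := Ideal.mem_span_pair.mp hπmem
  obtain ⟨u, hu⟩ := Ideal.mem_span_singleton'.mp hx0mem
  obtain ⟨v, hv⟩ := Ideal.mem_span_singleton'.mp hx1mem
  have hcancel : α * u + β * v = 1 := by
    have hsum : (α * u + β * v) * π = 1 * π := by
      rw [one_mul, add_mul, mul_assoc, mul_assoc, hu, hv]
      exact hπeq
    exact mul_right_cancel₀ hπne hsum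
  have hcase := IsLocalRing.isUnit_or_isUnit_of_isUnit_add
    (a := α * u) (b := β * v) (by rw [hcancel]; exact isUnit_one)
  -- in either case we produce c, with either x1 = c * x0 or x0 = c * x1
  have main : ∀ c : L, (x1 = c * x0 ∨ x0 = c * x1) → False := by
    intro c hc
    obtain ⟨r, s, hsnotin, hspec⟩ := hfrac c
    rcases hc with hc | hc
    · -- x1 = c * x0 : then x0^p (1 + c^p x2) = 0, so c^p * x2 = -1
      have h1 : x0 ^ p * (1 + c ^ p * x2) = 0 := by
        rw [← hrelL, hc]
        ring
      have h2 : c ^ p * x2 = -1 := by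
        rcases mul_eq_zero.mp h1 with h | h
        · exact absurd h (pow_ne_zero p hx0ne)
        · linear_combination h
      have h3 : (Af r) ^ p * x2 = -(Af s ^ p) := by
        rw [← hspec]
        calc (c * Af s) ^ p * x2 = (c ^ p * x2) * (Af s) ^ p := by ring
        _ = -1 * (Af s) ^ p := by rw [h2]
        _ = -(Af s ^ p) := by ring
      refine case_a hp r s hsnotin (hinj ?_)
      rw [map_mul, map_pow, map_neg, map_pow]
      exact h3
    · -- x0 = c * x1 : then x1^p (c^p + x2) = 0, so c^p = -x2
      have h1 : x1 ^ p * (c ^ p + x2) = 0 := by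
        rw [← hrelL, hc]
        ring
      have h2 : c ^ p = -x2 := by
        rcases mul_eq_zero.mp h1 with h | h
        · exact absurd h (pow_ne_zero p hx1ne)
        · linear_combination h
      have h3 : (Af r) ^ p = -(x2 * Af s ^ p) := by
        rw [← hspec]
        calc (c * Af s) ^ p = c ^ p * (Af s) ^ p := by ring
        _ = -x2 * (Af s) ^ p := by rw [h2]
        _ = -(x2 * Af s ^ p) := by ring
      refine case_b hp r s hsnotin (hinj ?_)
      rw [map_pow, map_neg, map_mul, map_pow]
      exact h3
  rcases hcase with h | h
  · -- u is a unit : x1 = (v * u⁻¹) * x0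
    have huu : IsUnit u := isUnit_of_mul_isUnit_right (by rwa [mul_comm] at h)
    obtain ⟨uu, huu'⟩ := huu
    refine main (v * ↑uu⁻¹) (Or.inl ?_)
    rw [← hv, ← hu, ← huu']
    calc v * π = v * (1 * π) := by ring
    _ = v * ((↑uu⁻¹ * ↑uu) * π) := by rw [Units.inv_mul]
    _ = v * ↑uu⁻¹ * (↑uu * π) := by ring
  · -- v is a unit : x0 = (u * v⁻¹) * x1
    have hvv : IsUnit v := isUnit_of_mul_isUnit_right (by rwa [mul_comm] at h)
    obtain ⟨vv, hvv'⟩ := hvv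
    refine main (u * ↑vv⁻¹) (Or.inr ?_)
    rw [← hv, ← hu, ← hvv']
    calc u * π = u * (1 * π) := by ring
    _ = u * ((↑vv⁻¹ * ↑vv) * π) := by rw [Units.inv_mul]
    _ = u * ↑vv⁻¹ * (↑vv * π) := by ring

lemma not_dvr (hp : p.Prime) (hP : (ExampleIdeal k p).IsPrime) :
    ∃ h : IsDomain (Localization.AtPrime (ExampleIdeal k p)),
      ¬ @IsDiscreteValuationRing (Localization.AtPrime (ExampleIdeal k p)) _ h := by
  haveI := domainR (k := k) hp.pos
  haveI := hP
  have hle : (ExampleIdeal k p).primeCompl ≤ nonZeroDivisors (ExampleRing k p) :=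
    (ExampleIdeal k p).primeCompl_le_nonZeroDivisors
  haveI hdom : IsDomain (Localization.AtPrime (ExampleIdeal k p)) :=
    IsLocalization.isDomain_localization hle
  refine ⟨hdom, ?_⟩
  intro hdvr
  have hinj : Function.Injective
      (algebraMap (ExampleRing k p) (Localization.AtPrime (ExampleIdeal k p))) :=
    IsLocalization.injective (Localization.AtPrime (ExampleIdeal k p)) hle
  refine dvr_contra_general (L := Localization.AtPrime (ExampleIdeal k p)) hp
    (algebraMap (ExampleRing k p) (Localization.AtPrime (ExampleIdeal k p))) hinj ?_ ?_ ?_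
  · have h2 : Ideal.map (algebraMap (ExampleRing k p)
        (Localization.AtPrime (ExampleIdeal k p))) (ExampleIdeal k p)
        = Ideal.span {algebraMap (ExampleRing k p)
            (Localization.AtPrime (ExampleIdeal k p)) (mkq k p (X 0)),
          algebraMap (ExampleRing k p)
            (Localization.AtPrime (ExampleIdeal k p)) (mkq k p (X 1))} := by
      rw [Ideal.map_span, Set.image_insert_eq, Set.image_singleton]
      rfl
    exact (Localization.AtPrime.map_eq_maximalIdeal (I := ExampleIdeal k p)).symm.trans h2
  · intro c
    obtain ⟨⟨r, s⟩, hrs⟩ := IsLocalization.mk'_surjective (ExampleIdeal k p).primeCompl c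
    exact ⟨r, ↑s, s.2, by rw [← hrs]; exact IsLocalization.mk'_spec _ r s⟩
  · exact IsPrincipalIdealRing.principal _

end ExDVR

/-- Let `k` be a field of prime characteristic `p`, let
`R = k[a,b,y]/(a^p + b^p·y)` and let `P = (a,b) ⊆ R`. Then `P` is a prime ideal of height `1`
(there is a prime strictly below `P` but no chain of two primes strictly below `P`), and the
localization `R_P` is a domain which is not a discrete valuation ring (equivalently, the
one-dimensional Noetherian local domain `R_P` is not regular). -/
theorem localization_at_height_one_prime_not_regular
    (k : Type*) [Field k] (p : ℕ) (hp : p.Prime) [CharP k p] :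
    (ExampleIdeal k p).IsPrime ∧
      (∃ Q : Ideal (ExampleRing k p), Q.IsPrime ∧ Q < ExampleIdeal k p) ∧
      (¬ ∃ Q₁ Q₂ : Ideal (ExampleRing k p),
          Q₁.IsPrime ∧ Q₂.IsPrime ∧ Q₁ < Q₂ ∧ Q₂ < ExampleIdeal k p) ∧
      (∀ (hP : (ExampleIdeal k p).IsPrime),
        haveI := hP
        ∃ h : IsDomain (Localization.AtPrime (ExampleIdeal k p)),
          ¬ @IsDiscreteValuationRing (Localization.AtPrime (ExampleIdeal k p)) _ h) := by
  haveI hdom := ExMain2.domainR (k := k) hp.pos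
  refine ⟨ExMain.P_prime hp.pos, ?_, ExChain.no_chain hp, fun hP => ExDVR.not_dvr hp hP⟩
  refine ⟨⊥, Ideal.bot_prime, ?_⟩
  rw [bot_lt_iff_ne_bot]
  intro h
  have hmem : ExMain.mkq k p (X 0) ∈ ExampleIdeal k p :=
    Ideal.subset_span (Set.mem_insert _ _)
  rw [h] at hmem
  exact ExMain2.mk_X0_ne_zero hp (Ideal.mem_bot.mp hmem)
end

section
/- Let k be a field of prime characteristic p and let R = k[z₁,z₂,w₁,w₂]/(z₁·w₁^p + z₂·w₂^p) be the quotient of the polynomial ring in four variables by the principal ideal generated by z₁·w₁^p + z₂·w₂^p. Then R is an integral domain and R is not integrally closed in its field of fractions; explicitly, the element z₁·w₁/w₂ of Frac(R) is integral over R (it satisfies T^p + z₁^{p-1}·z₂ = 0) but does not lie in R. -/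
open MvPolynomial

set_option synthInstance.maxHeartbeats 400000
set_option maxHeartbeats 1000000

private lemma mv_prime_X {R : Type*} [CommRing R] [IsDomain R] {n : ℕ} (i : Fin (n+1)) :
    Prime (MvPolynomial.X i : MvPolynomial (Fin (n+1)) R) := by
  rw [← MulEquiv.prime_iff (renameEquiv R (Equiv.swap i 0)).toMulEquiv]
  have h : (renameEquiv R (Equiv.swap i 0)).toMulEquiv (X i) = (X 0 : MvPolynomial (Fin (n+1)) R) := by
    simp
  rw [h, ← MulEquiv.prime_iff (finSuccEquiv R n).toMulEquiv]
  have h2 : (finSuccEquiv R n).toMulEquiv (X 0) = (Polynomial.X : Polynomial (MvPolynomial (Fin n) R)) := by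
    simp [finSuccEquiv_X_zero]
  rw [h2]
  exact Polynomial.prime_X

private lemma mv_X_not_dvd {k : Type*} [Field k] {n : ℕ} {i j : Fin n} (hij : i ≠ j) :
    ¬ (X i : MvPolynomial (Fin n) k) ∣ X j := by
  rintro ⟨c, hc⟩
  have := congrArg (eval (fun l => if l = i then (0 : k) else 1)) hc
  simp [hij.symm] at this

private lemma prime_f (k : Type*) [Field k] {p : ℕ} (hp : p.Prime) :
    Prime (X 0 * X 2 ^ p + X 1 * X 3 ^ p : MvPolynomial (Fin 4) k) := by
  classical
  rw [← MulEquiv.prime_iff (finSuccEquiv k 3).toMulEquiv]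
  have h1 : (1 : Fin 4) = (0 : Fin 3).succ := rfl
  have h2 : (2 : Fin 4) = (1 : Fin 3).succ := rfl
  have h3 : (3 : Fin 4) = (2 : Fin 3).succ := rfl
  have hef : (finSuccEquiv k 3).toMulEquiv (X 0 * X 2 ^ p + X 1 * X 3 ^ p : MvPolynomial (Fin 4) k)
      = Polynomial.C (X 1 ^ p) * Polynomial.X + Polynomial.C ((X 0) * X 2 ^ p) := by
    show (finSuccEquiv k 3) (X 0 * X 2 ^ p + X 1 * X 3 ^ p : MvPolynomial (Fin 4) k) = _
    rw [h1, h2, h3, map_add, map_mul, map_mul, map_pow, map_pow, finSuccEquiv_X_zero,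
      finSuccEquiv_X_succ, finSuccEquiv_X_succ, finSuccEquiv_X_succ, ← Polynomial.C_pow,
      ← Polynomial.C_pow, ← Polynomial.C_mul]
    ring
  rw [hef]
  letI : NormalizationMonoid (MvPolynomial (Fin 3) k) :=
    UniqueFactorizationMonoid.normalizationMonoid.toNormalizationMonoid
  letI : NormalizedGCDMonoid (MvPolynomial (Fin 3) k) :=
    UniqueFactorizationMonoid.toNormalizedGCDMonoid _
  rw [← UniqueFactorizationMonoid.irreducible_iff_prime]
  have hprim : Polynomial.IsPrimitive
      (Polynomial.C (X 1 ^ p : MvPolynomial (Fin 3) k) * Polynomial.X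
        + Polynomial.C ((X 0) * X 2 ^ p)) := by
    intro r hr
    rw [Polynomial.C_dvd_iff_dvd_coeff] at hr
    have hc1 : r ∣ (X 1 ^ p : MvPolynomial (Fin 3) k) := by
      have := hr 1
      simp only [Polynomial.coeff_add, Polynomial.coeff_C_mul, Polynomial.coeff_X_one,
        Polynomial.coeff_C, mul_one] at this
      simpa using this
    have hc0 : r ∣ ((X 0) * X 2 ^ p : MvPolynomial (Fin 3) k) := by
      have := hr 0
      simp only [Polynomial.coeff_add, Polynomial.coeff_C_mul, Polynomial.coeff_X_zero,
        Polynomial.coeff_C, mul_zero, zero_add] at this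
      simpa using this
    by_contra hru
    have hr0 : r ≠ 0 := by
      rintro rfl
      have : (X 1 ^ p : MvPolynomial (Fin 3) k) = 0 := zero_dvd_iff.mp hc1
      exact pow_ne_zero p (X_ne_zero 1) this
    obtain ⟨q, hqirr, hqr⟩ := WfDvdMonoid.exists_irreducible_factor hru hr0
    have hqprime : Prime q := UniqueFactorizationMonoid.irreducible_iff_prime.mp hqirr
    have hq1 : q ∣ (X 1 : MvPolynomial (Fin 3) k) :=
      hqprime.dvd_of_dvd_pow (hqr.trans hc1)
    -- q is associated to X 1
    have hX1 : (X 1 : MvPolynomial (Fin 3) k) ∣ q := by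
      obtain ⟨c, hc⟩ := hq1
      rcases (mv_prime_X 1).irreducible.isUnit_or_isUnit hc with h | h
      · exact absurd h hqirr.not_isUnit
      · exact ⟨↑(h.unit⁻¹), by rw [hc, mul_assoc, IsUnit.mul_val_inv, mul_one]⟩
    have hX1d : (X 1 : MvPolynomial (Fin 3) k) ∣ (X 0) * X 2 ^ p :=
      hX1.trans (hqr.trans hc0)
    rcases (mv_prime_X 1).2.2 _ _ hX1d with h | h
    · exact mv_X_not_dvd (by decide) h
    · exact mv_X_not_dvd (by decide) ((mv_prime_X 1).dvd_of_dvd_pow h)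
  rw [hprim.irreducible_iff_irreducible_map_fraction_map
    (K := FractionRing (MvPolynomial (Fin 3) k))]
  rw [Polynomial.map_add, Polynomial.map_mul, Polynomial.map_C, Polynomial.map_X,
    Polynomial.map_C]
  apply Polynomial.irreducible_of_degree_eq_one
  apply Polynomial.degree_linear
  simp only [ne_eq, map_eq_zero_iff _
    (IsFractionRing.injective (MvPolynomial (Fin 3) k) (FractionRing (MvPolynomial (Fin 3) k)))]
  exact pow_ne_zero p (X_ne_zero 1)

/-- The ring `R = k[z₁,z₂,w₁,w₂]/(z₁·w₁^p + z₂·w₂^p)`, where the variables `X 0, X 1, X 2, X 3`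
of the polynomial ring play the roles of `z₁, z₂, w₁, w₂` respectively. -/
abbrev IncidenceRing (k : Type*) [Field k] (p : ℕ) : Type _ :=
  MvPolynomial (Fin 4) k ⧸
    Ideal.span {(X 0 * X 2 ^ p + X 1 * X 3 ^ p : MvPolynomial (Fin 4) k)}

/-- Let `k` be a field of prime characteristic `p` and let
`R = k[z₁,z₂,w₁,w₂]/(z₁·w₁^p + z₂·w₂^p)`. Then `R` is an integral domain which is not
integrally closed in its fraction field: explicitly, the element `t = z₁·w₁/w₂` of `Frac(R)`
(characterized by `w₂·t = z₁·w₁`) satisfies `t^p + z₁^{p-1}·z₂ = 0`, is integral over `R`,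
but does not lie in (the image of) `R`. -/
theorem incidence_ring_domain_not_integrallyClosed
    (k : Type*) [Field k] (p : ℕ) (hp : p.Prime) [CharP k p] :
    IsDomain (IncidenceRing k p) ∧
      ¬ IsIntegrallyClosed (IncidenceRing k p) ∧
      ∃ t : FractionRing (IncidenceRing k p),
        (algebraMap (IncidenceRing k p) (FractionRing (IncidenceRing k p))
              (Ideal.Quotient.mk _ (X 3 : MvPolynomial (Fin 4) k)) * t
            = algebraMap (IncidenceRing k p) (FractionRing (IncidenceRing k p))
              (Ideal.Quotient.mk _ (X 0 * X 2 : MvPolynomial (Fin 4) k))) ∧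
          t ^ p + algebraMap (IncidenceRing k p) (FractionRing (IncidenceRing k p))
              (Ideal.Quotient.mk _ (X 0 ^ (p - 1) * X 1 : MvPolynomial (Fin 4) k)) = 0 ∧
          IsIntegral (IncidenceRing k p) t ∧
          t ∉ (algebraMap (IncidenceRing k p) (FractionRing (IncidenceRing k p))).range := by
    classical
  set f : MvPolynomial (Fin 4) k := X 0 * X 2 ^ p + X 1 * X 3 ^ p with hf
  have hfp := prime_f k (p := p) hp
  haveI hIP : (Ideal.span {f}).IsPrime := (Ideal.span_singleton_prime hfp.ne_zero).mpr hfp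
  haveI hdom : IsDomain (IncidenceRing k p) := Ideal.Quotient.isDomain _
  set R := IncidenceRing k p
  set F := FractionRing R
  set π : MvPolynomial (Fin 4) k →+* R := Ideal.Quotient.mk (Ideal.span {f}) with hπ
  set φ : R →+* F := algebraMap R F with hφ
  have hinj : Function.Injective φ := IsFractionRing.injective R F
  have hp1 : p - 1 + 1 = p := Nat.succ_pred_eq_of_pos hp.pos
  -- `π f = 0`
  have hπf : π f = 0 := by
    rw [hπ, Ideal.Quotient.eq_zero_iff_mem]
    exact Ideal.subset_span rfl
  -- X 3 is nonzero in R
  have hw2 : π (X 3) ≠ 0 := by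
    rw [hπ, Ne, Ideal.Quotient.eq_zero_iff_mem, Ideal.mem_span_singleton']
    rintro ⟨c, hc⟩
    have := congrArg (eval (fun i : Fin 4 => if i = 3 then (1 : k) else 0)) hc
    simp [hf, hp.ne_zero] at this
  have hw2F : φ (π (X 3)) ≠ 0 := fun h => hw2 (hinj (by rwa [map_zero]))
  set t : F := φ (π (X 0 * X 2)) / φ (π (X 3)) with ht
  -- relation 1
  have h1 : φ (π (X 3)) * t = φ (π (X 0 * X 2)) := by
    rw [ht, mul_div_cancel₀ _ hw2F]
  -- the key algebraic identity
  have hkey : (X 0 * X 2 : MvPolynomial (Fin 4) k) ^ p + X 0 ^ (p - 1) * X 1 * X 3 ^ p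
      = X 0 ^ (p - 1) * f := by
    have hX0 : (X 0 : MvPolynomial (Fin 4) k) ^ p = X 0 ^ (p - 1) * X 0 := by
      rw [← pow_succ, hp1]
    rw [hf, mul_pow, hX0]
    ring
  have h2 : t ^ p + φ (π (X 0 ^ (p - 1) * X 1)) = 0 := by
    rw [ht, div_pow]
    rw [div_add' _ _ _ (pow_ne_zero p hw2F), div_eq_zero_iff]
    left
    rw [← map_pow, ← map_pow, ← map_pow, ← map_pow, ← map_mul, ← map_mul, ← map_add, ← map_add,
      hkey, map_mul π, hπf, mul_zero, map_zero]
  have hint : IsIntegral R t := by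
    refine ⟨Polynomial.X ^ p + Polynomial.C (π (X 0 ^ (p - 1) * X 1)),
      Polynomial.monic_X_pow_add_C _ hp.ne_zero, ?_⟩
    simpa using h2
  have hnr : t ∉ φ.range := by
    rintro ⟨r, hr⟩
    obtain ⟨g, rfl⟩ := Ideal.Quotient.mk_surjective r
    rw [← hr, ← map_mul, ← map_mul π] at h1
    have := Ideal.Quotient.eq.mp (hinj h1)
    rw [Ideal.mem_span_singleton'] at this
    obtain ⟨c, hc⟩ := this
    -- substitute X 3 ↦ 0
    have hsub := congrArg (aeval (R := k) (fun i : Fin 4 => if i = 3 then (0 : MvPolynomial (Fin 4) k) else X i)) hc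
    simp only [map_sub, map_mul, map_add, map_pow, aeval_X, hf] at hsub
    simp only [if_true, if_neg (by decide : ¬((0 : Fin 4) = 3)), if_neg (by decide : ¬((2 : Fin 4) = 3)),
      if_neg (by decide : ¬((1 : Fin 4) = 3)), zero_pow hp.ne_zero, mul_zero, add_zero, zero_mul,
      zero_sub] at hsub
    have hX2 : (X 2 : MvPolynomial (Fin 4) k) ^ p = X 2 ^ (p - 1) * X 2 := by
      rw [← pow_succ, hp1]
    have hzero : (X 0 * X 2 : MvPolynomial (Fin 4) k) *
        ((aeval (fun i : Fin 4 => if i = 3 then (0 : MvPolynomial (Fin 4) k) else X i)) c * X 2 ^ (p - 1) + 1) = 0 := by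
      rw [mul_add, mul_one]
      have : (X 0 * X 2 : MvPolynomial (Fin 4) k) *
          ((aeval (fun i : Fin 4 => if i = 3 then (0 : MvPolynomial (Fin 4) k) else X i)) c * X 2 ^ (p - 1))
          = (aeval (fun i : Fin 4 => if i = 3 then (0 : MvPolynomial (Fin 4) k) else X i)) c * (X 0 * X 2 ^ p) := by
        rw [hX2]; ring
      rw [this, hsub]
      ring
    rcases mul_eq_zero.mp hzero with h | h
    · exact (mul_ne_zero (X_ne_zero 0) (X_ne_zero 2)) h
    · have := congrArg constantCoeff h
      simp only [map_add, map_mul, map_pow, map_one, constantCoeff_X, map_zero] at this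
      rw [zero_pow (Nat.sub_ne_zero_of_lt hp.one_lt), mul_zero, zero_add] at this
      exact one_ne_zero this
  refine ⟨hdom, ?_, t, h1, h2, hint, hnr⟩
  intro hic
  obtain ⟨y, hy⟩ := IsIntegrallyClosed.isIntegral_iff.mp hint
  exact hnr ⟨y, hy⟩
end
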